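/- Let $U, \Sigma, H$ be real Hilbert spaces, $L_1, L_2 : U \times \Sigma \to H$ linear maps and $K : U \to H$ a map. Assume: (a) $C_1\|u\|_U^2 + C_2\|\sigma\|_\Sigma^2 \le \|L_1(u,\sigma)\|^2 + \|L_2(u,\sigma)\|^2$ for all $(u,\sigma)$ with $C_1, C_2 > 0$; (b) $\|K(u)-K(v)\|^2 \le L\|u-v\|_U^2$ for $u,v$ in a set $S \subseteq U$ with $0 < L < C_1$. Let $(u,\sigma)$ satisfy $L_1(u,\sigma) + f = 0$ and $L_2(u,\sigma) + K(u) + g = 0$. Then for any $C$ with $L/C_1 < C < 1$ and all $(v,\tau) \in S \times \Sigma$: $\|L_1(v,\tau)+f\|^2 + \|L_2(v,\tau)+K(v)+g\|^2 \ge \min\{C_1(1-C) - L(C^{-1}-1),\ C_2(1-C)\}\,(\|u-v\|_U^2 + \|\sigma-\tau\|_\Sigma^2)$. -/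

import Mathlib

lemma young_lb {H : Type*} [NormedAddCommGroup H] [InnerProductSpace ℝ H]
    (x y : H) (C : ℝ) (hC : 0 < C) :
    (1-C)*‖x‖^2 - (C⁻¹-1)*‖y‖^2 ≤ ‖x+y‖^2 := by
  have h := norm_add_sq_real x y
  have hi : -(‖x‖*‖y‖) ≤ (inner ℝ x y : ℝ) := by
    have := abs_real_inner_le_norm x y
    rw [abs_le] at this; exact this.1
  have h2 : 2*(‖x‖*‖y‖) ≤ C*‖x‖^2 + C⁻¹*‖y‖^2 := by
    have hs := sq_nonneg (C*‖x‖ - ‖y‖)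
    have hcc : C * C⁻¹ = 1 := mul_inv_cancel₀ hC.ne'
    have hinv : 0 < C⁻¹ := inv_pos.mpr hC
    nlinarith [sq_nonneg ‖x‖, sq_nonneg ‖y‖]
  nlinarith [h, hi, h2]

theorem stmt7 {U Sig H : Type*} [NormedAddCommGroup U] [InnerProductSpace ℝ U]
    [NormedAddCommGroup Sig] [InnerProductSpace ℝ Sig]
    [NormedAddCommGroup H] [InnerProductSpace ℝ H]
    (L1 L2 : U × Sig →ₗ[ℝ] H) (K : U → H) (S : Set U)
    (C1 C2 L : ℝ) (hC1 : 0 < C1) (hC2 : 0 < C2) (hL : 0 < L) (hLC : L < C1)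
    (hco : ∀ (u : U) (σ : Sig),
      C1*‖u‖^2 + C2*‖σ‖^2 ≤ ‖L1 (u,σ)‖^2 + ‖L2 (u,σ)‖^2)
    (hlip : ∀ x ∈ S, ∀ y ∈ S, ‖K x - K y‖^2 ≤ L*‖x-y‖^2)
    (f g : H) (u : U) (σ : Sig) (hu : u ∈ S)
    (h1 : L1 (u,σ) + f = 0) (h2 : L2 (u,σ) + K u + g = 0)
    (C : ℝ) (hCl : L/C1 < C) (hCu : C < 1) :
    ∀ v ∈ S, ∀ τ : Sig,
      min (C1*(1-C) - L*(C⁻¹-1)) (C2*(1-C)) * (‖u-v‖^2 + ‖σ-τ‖^2)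
        ≤ ‖L1 (v,τ) + f‖^2 + ‖L2 (v,τ) + K v + g‖^2 := by
  intro v hv τ
  have hC : 0 < C := lt_trans (div_pos hL hC1) hCl
  have hsub : (u - v, σ - τ) = (u, σ) - (v, τ) := rfl
  have e1 : L1 (v,τ) + f = -(L1 (u-v, σ-τ)) := by
    rw [hsub, map_sub]
    have : L1 (u,σ) = -f := by linear_combination (norm := abel1) h1
    rw [this]; abel
  have e2 : L2 (v,τ) + K v + g = -(L2 (u-v, σ-τ) + (K u - K v)) := by
    rw [hsub, map_sub]
    have : L2 (u,σ) = -(K u) - g := by linear_combination (norm := abel1) h2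
    rw [this]; abel
  rw [e1, e2, norm_neg, norm_neg]
  have hy := young_lb (L2 (u-v, σ-τ)) (K u - K v) C hC
  have hcoe := hco (u-v) (σ-τ)
  have hlipe := hlip u hu v hv
  have h1nn := sq_nonneg ‖L1 (u-v, σ-τ)‖
  have hunn := sq_nonneg ‖u-v‖
  have hsnn := sq_nonneg ‖σ-τ‖
  have hm1 : min (C1*(1-C) - L*(C⁻¹-1)) (C2*(1-C)) ≤ C1*(1-C) - L*(C⁻¹-1) :=
    min_le_left _ _
  have hm2 : min (C1*(1-C) - L*(C⁻¹-1)) (C2*(1-C)) ≤ C2*(1-C) := min_le_right _ _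
  have hCinv : 1 ≤ C⁻¹ := (one_le_inv_iff₀).mpr ⟨hC, le_of_lt hCu⟩
  nlinarith [hy, hcoe, hlipe, h1nn, hunn, hsnn, hm1, hm2,
    mul_nonneg (sub_nonneg.mpr hCinv) (mul_nonneg hL.le hunn),
    sq_nonneg ‖K u - K v‖]
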